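/- Let K : ℕ → ℕ satisfy 1 ≤ K(n) and K(n) = O(log n). Set t_ε = ⌊50·(1 + (log n)/(2K(n)))·n/log log n⌋ and q_n = 1 − exp(−K(n)/(log log n)⁴). Then Pr(Bin(n + t_ε, q_n) < n) → 0 as n → ∞. -/

import Mathlib

open Filter

set_option maxHeartbeats 1000000

/-- `Pr(Bin(N,q) < a)`: the lower tail of a binomial random variable with `N` trials
and success probability `q`, below the real threshold `a`. -/
noncomputable def binomLT (N : ℕ) (q a : ℝ) : ℝ :=
  ∑ k ∈ Finset.range (N + 1),
    if (k : ℝ) < a then (N.choose k : ℝ) * q ^ k * (1 - q) ^ (N - k) else 0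

lemma binomLT_nonneg (N : ℕ) (q a : ℝ) (hq0 : 0 ≤ q) (hq1 : q ≤ 1) : 0 ≤ binomLT N q a := by
  apply Finset.sum_nonneg
  intro k _
  split
  · have : (0:ℝ) ≤ 1 - q := by linarith
    positivity
  · exact le_refl 0

lemma chernoff (N : ℕ) (q a lam : ℝ) (hq0 : 0 ≤ q) (hq1 : q ≤ 1) (hl : 0 ≤ lam) :
    binomLT N q a ≤ Real.exp (lam * a) * (q * Real.exp (-lam) + (1 - q)) ^ N := by
  have h1q : (0:ℝ) ≤ 1 - q := by linarith
  have key : (q * Real.exp (-lam) + (1 - q)) ^ N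
      = ∑ k ∈ Finset.range (N + 1),
          (N.choose k : ℝ) * (q * Real.exp (-lam)) ^ k * (1 - q) ^ (N - k) := by
    rw [add_pow]
    exact Finset.sum_congr rfl fun k _ => by ring
  rw [key, Finset.mul_sum]
  apply Finset.sum_le_sum
  intro k hk
  split
  · rename_i hka
    have hexpk : (q * Real.exp (-lam)) ^ k = q ^ k * Real.exp (-(lam * k)) := by
      rw [mul_pow, ← Real.exp_nat_mul]
      ring_nf
    have heq : Real.exp (lam * a) * ((N.choose k : ℝ) * (q * Real.exp (-lam)) ^ k * (1 - q) ^ (N - k))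
        = Real.exp (lam * (a - k)) * ((N.choose k : ℝ) * q ^ k * (1 - q) ^ (N - k)) := by
      rw [hexpk, show lam * (a - (k:ℝ)) = lam * a + -(lam * k) by ring, Real.exp_add]
      ring
    rw [heq]
    have hone : 1 ≤ Real.exp (lam * (a - k)) :=
      Real.one_le_exp (by nlinarith)
    have hterm : (0:ℝ) ≤ (N.choose k : ℝ) * q ^ k * (1 - q) ^ (N - k) := by positivity
    nlinarith
  · positivity

lemma chernoff2 (N : ℕ) (q a : ℝ) (hq0 : 0 ≤ q) (hq1 : q ≤ 1) (hN : 0 < N)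
    (hM : 0 < (N:ℝ) * q - a) :
    binomLT N q a ≤ Real.exp (-((N:ℝ) * q - a) ^ 2 / (4 * N)) := by
  have hN0 : (0:ℝ) < N := by exact_mod_cast hN
  set M : ℝ := (N:ℝ) * q - a with hMdef
  set lam : ℝ := M / (2 * N) with hlamdef
  have hlam0 : 0 < lam := by positivity
  have h := chernoff N q a lam hq0 hq1 hlam0.le
  have hE0 : 0 < Real.exp (-lam) := Real.exp_pos _
  have hbase : q * Real.exp (-lam) + (1 - q) ≤ Real.exp (-(q * (1 - Real.exp (-lam)))) := by
    have h2 := Real.add_one_le_exp (-(q * (1 - Real.exp (-lam))))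
    linarith
  have hbase0 : (0:ℝ) ≤ q * Real.exp (-lam) + (1 - q) := by nlinarith
  have hpow : (q * Real.exp (-lam) + (1 - q)) ^ N
      ≤ Real.exp ((N:ℝ) * (-(q * (1 - Real.exp (-lam))))) := by
    rw [Real.exp_nat_mul]
    exact pow_le_pow_left₀ hbase0 hbase N
  have h3 : binomLT N q a ≤ Real.exp (lam * a + (N:ℝ) * (-(q * (1 - Real.exp (-lam))))) := by
    rw [Real.exp_add]
    calc binomLT N q a ≤ Real.exp (lam * a) * (q * Real.exp (-lam) + (1 - q)) ^ N := h
      _ ≤ Real.exp (lam * a) * Real.exp ((N:ℝ) * (-(q * (1 - Real.exp (-lam))))) := by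
          exact mul_le_mul_of_nonneg_left hpow (Real.exp_pos _).le
  refine h3.trans (Real.exp_le_exp.2 ?_)
  have hEub : Real.exp (-lam) ≤ 1 - lam + lam ^ 2 := by
    have hmul : Real.exp (-lam) * Real.exp lam = 1 := by
      rw [← Real.exp_add]; simp
    have h4 := Real.add_one_le_exp lam
    nlinarith [mul_le_mul_of_nonneg_left h4 hE0.le]
  have hq' : (N:ℝ) * q * (lam - lam ^ 2) ≤ (N:ℝ) * q * (1 - Real.exp (-lam)) := by
    apply mul_le_mul_of_nonneg_left (by linarith) (by positivity)
  have h5 : (N:ℝ) * q * lam - (N:ℝ) * lam ^ 2 ≤ (N:ℝ) * q * (1 - Real.exp (-lam)) := by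
    nlinarith [hq', mul_nonneg (mul_nonneg hN0.le (sub_nonneg.2 hq1)) (sq_nonneg lam)]
  have h7 : lam * a - ((N:ℝ) * q * lam - (N:ℝ) * lam ^ 2) = -M ^ 2 / (4 * N) := by
    rw [hlamdef, hMdef]
    field_simp
    ring
  linarith

lemma main_bound (K : ℕ → ℕ) (hK1 : ∀ n, 1 ≤ K n) (n : ℕ)
    (hL : (10:ℝ)^10 ≤ Real.log n) :
    binomLT (n + ⌊50 * (1 + Real.log n / (2 * K n)) * n / Real.log (Real.log n)⌋₊)
      (1 - Real.exp (-(K n : ℝ) / (Real.log (Real.log n)) ^ 4)) (n : ℝ)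
      ≤ Real.exp (-((n:ℝ) ^ ((1:ℝ)/2) / 16)) := by
  have hL0 : (0:ℝ) < Real.log n := lt_of_lt_of_le (by norm_num) hL
  set L : ℝ := Real.log n with hLdef
  set l : ℝ := Real.log L with hldef
  set Kr : ℝ := (K n : ℝ) with hKrdef
  have hKr1 : (1:ℝ) ≤ Kr := by rw [hKrdef]; exact_mod_cast hK1 n
  have hn1 : (1:ℝ) < (n:ℝ) := by
    by_contra h
    push_neg at h
    have := Real.log_nonpos (by positivity) h
    rw [← hLdef] at this
    linarith
  have hlL : l ≤ L := by
    rw [hldef]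
    have := Real.log_le_sub_one_of_pos hL0
    linarith
  have hLn : L ≤ (n:ℝ) := by
    rw [hLdef]
    have := Real.log_le_sub_one_of_pos (show (0:ℝ) < n by linarith)
    linarith
  have hexp2 : Real.exp 2 < 8 := by
    have h1 : Real.exp 2 = Real.exp 1 * Real.exp 1 := by rw [← Real.exp_add]; norm_num
    nlinarith [Real.exp_one_lt_d9, Real.exp_pos 1]
  have hl2 : (2:ℝ) ≤ l := by
    rw [hldef, Real.le_log_iff_exp_le hL0]
    nlinarith
  -- log n ≤ 4 n^(1/4), for later
  have hL4 : L ≤ 4 * (n:ℝ) ^ ((1:ℝ)/4) := by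
    have hrp := Real.log_le_rpow_div (show (0:ℝ) ≤ n by linarith) (show (0:ℝ) < 1/4 by norm_num)
    rw [← hLdef] at hrp
    linarith [hrp, show (n:ℝ) ^ ((1:ℝ)/4) / (1/4) = 4 * (n:ℝ) ^ ((1:ℝ)/4) by ring]
  -- 21 l^5 ≤ 25 L
  have h21 : 21 * l ^ 5 ≤ 25 * L := by
    have hl0 : (0:ℝ) < l := by linarith
    have hrp := Real.log_le_rpow_div hL0.le (show (0:ℝ) < 1/10 by norm_num)
    have hl' : l ≤ 10 * L ^ ((1:ℝ)/10) := by
      rw [hldef]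
      linarith [hrp, show L ^ ((1:ℝ)/10) / (1/10) = 10 * L ^ ((1:ℝ)/10) by ring]
    have hpow5 : (L ^ ((1:ℝ)/10)) ^ (5:ℕ) = L ^ ((1:ℝ)/2) := by
      rw [← Real.rpow_natCast (L ^ ((1:ℝ)/10)) 5, ← Real.rpow_mul hL0.le]
      norm_num
    have hy0 : (0:ℝ) ≤ L ^ ((1:ℝ)/10) := Real.rpow_nonneg hL0.le _
    have hl5 : l ^ 5 ≤ 10 ^ 5 * L ^ ((1:ℝ)/2) := by
      calc l ^ 5 ≤ (10 * L ^ ((1:ℝ)/10)) ^ 5 := pow_le_pow_left₀ hl0.le hl' 5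
        _ = 10 ^ 5 * (L ^ ((1:ℝ)/10)) ^ (5:ℕ) := by rw [mul_pow]
        _ = 10 ^ 5 * L ^ ((1:ℝ)/2) := by rw [hpow5]
    have hs2 : L ^ ((1:ℝ)/2) * L ^ ((1:ℝ)/2) = L := by
      rw [← Real.rpow_add hL0]; norm_num
    have hs0 : (0:ℝ) ≤ L ^ ((1:ℝ)/2) := Real.rpow_nonneg hL0.le _
    have hsge : (10:ℝ)^5 ≤ L ^ ((1:ℝ)/2) := by nlinarith
    nlinarith
  clear_value L l Kr
  clear hldef hKrdef
  have hn0 : (0:ℝ) < n := by linarith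
  have hl0 : (0:ℝ) < l := by linarith
  have hln : l ≤ (n:ℝ) := hlL.trans hLn
  have hnl1 : (1:ℝ) ≤ (n:ℝ)/l := (one_le_div hl0).2 hln
  have hKr0 : (0:ℝ) < Kr := by linarith
  -- the exponent x
  rw [neg_div]
  set x : ℝ := Kr / l ^ 4 with hxdef
  have hx0 : 0 < x := by rw [hxdef]; positivity
  have hxval : x * l ^ 4 = Kr := by rw [hxdef]; field_simp
  set E : ℝ := Real.exp (-x) with hEdef
  have hE0 : 0 < E := Real.exp_pos _
  have hE1 : E < 1 := by
    rw [hEdef]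
    exact Real.exp_lt_one_iff.2 (by linarith)
  have hmulE : E * Real.exp x = 1 := by rw [hEdef, ← Real.exp_add]; simp
  have hexpx : x + 1 ≤ Real.exp x := Real.add_one_le_exp x
  clear_value x E
  clear hEdef hxdef
  have hq0 : (0:ℝ) ≤ 1 - E := by linarith
  have hq1 : (1:ℝ) - E ≤ 1 := by linarith
  -- bounds on t
  set T : ℝ := 50 * (1 + L / (2 * Kr)) * n / l with hTdef
  set t : ℕ := ⌊T⌋₊ with htdef
  have hT0 : 0 ≤ T := by rw [hTdef]; positivity
  have htu : (t:ℝ) ≤ T := by rw [htdef]; exact Nat.floor_le hT0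
  have htl : T - 1 ≤ (t:ℝ) := by rw [htdef]; exact (Nat.sub_one_lt_floor T).le
  have hTsplit : T = 50 * ((n:ℝ)/l) + (25 * n * L / (Kr * l)) := by
    rw [hTdef]; field_simp; ring
  clear_value T t
  clear hTdef htdef
  have ht0 : (0:ℝ) ≤ t := Nat.cast_nonneg t
  have ht49 : 49 * ((n:ℝ)/l) ≤ (t:ℝ) := by
    have h1 : (0:ℝ) ≤ 25 * n * L / (Kr * l) := by positivity
    linarith
  have ht25 : 25 * (n:ℝ) * L / (Kr * l) - 1 ≤ (t:ℝ) := by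
    have h1 : (0:ℝ) ≤ 50 * ((n:ℝ)/l) := by positivity
    linarith
  have htN : (n:ℝ) + t ≤ 51 * n * L / l := by
    have h1 : 25 * (n:ℝ) * L / (Kr * l) ≤ 25 * n * L / l := by
      apply div_le_div_of_nonneg_left (by positivity) (by positivity)
      nlinarith
    have h2 : (n:ℝ) ≤ n * L / l := by
      rw [le_div_iff₀ hl0]
      nlinarith [mul_le_mul_of_nonneg_left hlL hn0.le]
    have h3 : 50 * ((n:ℝ)/l) ≤ 25 * (n:ℝ) * L / l := by
      rw [show 50 * ((n:ℝ)/l) = 50 * (n:ℝ) / l by ring, div_le_div_iff₀ hl0 hl0]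
      nlinarith [mul_nonneg (mul_nonneg hn0.le hl0.le) (show (0:ℝ) ≤ L - 2 by linarith)]
    have h4 : 25 * (n:ℝ) * L / l + 25 * (n:ℝ) * L / l + n * L / l = 51 * n * L / l := by ring
    linarith
  -- the margin
  set M : ℝ := ((n:ℝ) + t) * (1 - E) - n with hMdef
  have hMeq : M = t * (1 - E) - n * E := by rw [hMdef]; ring
  clear_value M
  clear hMdef
  have hM19 : 19 * ((n:ℝ)/l) ≤ M := by
    by_cases hc : E ≤ 1/l
    · -- case A
      have hhalf : 1/l ≤ 1/2 := by
        apply one_div_le_one_div_of_le (by norm_num) hl2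
      have h1 : (t:ℝ) * E ≤ (t:ℝ) * (1/2) :=
        mul_le_mul_of_nonneg_left (hc.trans hhalf) ht0
      have h2 : (n:ℝ) * E ≤ (n:ℝ) * (1/l) := mul_le_mul_of_nonneg_left hc hn0.le
      rw [hMeq]
      have h3 : (n:ℝ) * (1/l) = n/l := by ring
      linarith
    · -- case B
      push_neg at hc
      have hEl : 1/l ≤ E := hc.le
      have hxE : x * E ≤ 1 := by nlinarith
      have h1mE : x * E ≤ 1 - E := by nlinarith
      have step1 : 25 * (n:ℝ) * L / l ^ 5 - x ≤ (t:ℝ) * x := by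
        have ha : (25 * (n:ℝ) * L / (Kr * l) - 1) * x ≤ (t:ℝ) * x :=
          mul_le_mul_of_nonneg_right ht25 hx0.le
        have hb : (25 * (n:ℝ) * L / (Kr * l) - 1) * x = 25 * n * L / l ^ 5 - x := by
          rw [← hxval]
          field_simp
        linarith
      have step2 : ((t:ℝ) * x) * E ≤ (t:ℝ) * (1 - E) := by
        have h := mul_le_mul_of_nonneg_left h1mE ht0
        nlinarith
      have step3 : (25 * (n:ℝ) * L / l ^ 5 - x) * E ≤ ((t:ℝ) * x) * E :=
        mul_le_mul_of_nonneg_right step1 hE0.le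
      have h25 : (21:ℝ) ≤ 25 * L / l ^ 5 := by
        rw [le_div_iff₀ (by positivity)]
        linarith
      have hfact : (n:ℝ) * (1/l) * 20 ≤ (n:ℝ) * E * (25 * L / l ^ 5 - 1) := by
        apply mul_le_mul
        · exact mul_le_mul_of_nonneg_left hEl hn0.le
        · linarith
        · norm_num
        · positivity
      have hexpand : (25 * (n:ℝ) * L / l ^ 5 - x) * E = (n:ℝ) * E * (25 * L / l ^ 5) - x * E := by
        ring
      rw [hMeq]
      have h5 : (n:ℝ) * (1/l) = n/l := by ring
      nlinarith [mul_pos hn0 hE0]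
  have hMpos : 0 < M := lt_of_lt_of_le (by positivity) hM19
  have hnn : 0 < n := by exact_mod_cast hn0
  have hNnat : 0 < n + t := by omega
  have hcast : ((n + t : ℕ) : ℝ) = (n:ℝ) + t := by push_cast; ring
  have hid : ((n + t : ℕ) : ℝ) * (1 - E) - (n:ℝ) = M := by rw [hMeq, hcast]; ring
  have hch := chernoff2 (n + t) (1 - E) (n:ℝ) hq0 hq1 hNnat (by rw [hid]; exact hMpos)
  rw [hid, hcast] at hch
  refine hch.trans (Real.exp_le_exp.2 ?_)
  set s : ℝ := (n:ℝ) ^ ((1:ℝ)/2) with hsdef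
  have hs0 : 0 ≤ s := by rw [hsdef]; positivity
  have hs2 : s * s = (n:ℝ) := by
    rw [hsdef, ← Real.rpow_add hn0]
    norm_num
  have h14 : (n:ℝ) ^ ((1:ℝ)/4) * (n:ℝ) ^ ((1:ℝ)/4) = s := by
    rw [hsdef, ← Real.rpow_add hn0]
    norm_num
  clear_value s
  have hLl16 : L * l ≤ 16 * s := by
    have h1 : l ≤ 4 * (n:ℝ) ^ ((1:ℝ)/4) := hlL.trans hL4
    have h2 : (0:ℝ) ≤ (n:ℝ) ^ ((1:ℝ)/4) := by positivity
    nlinarith [mul_le_mul hL4 h1 hl0.le (show (0:ℝ) ≤ 4 * (n:ℝ) ^ ((1:ℝ)/4) by positivity)]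
  have hNR0 : (0:ℝ) < (n:ℝ) + t := by linarith
  have hkey : s/16 ≤ M ^ 2 / (4 * ((n:ℝ) + t)) := by
    have hstep1 : s/16 ≤ (19 * ((n:ℝ)/l)) ^ 2 / (4 * (51 * (n:ℝ) * L / l)) := by
      rw [div_le_div_iff₀ (by norm_num) (by positivity)]
      rw [show s * (4 * (51 * (n:ℝ) * L / l)) = (204 * (s * (n:ℝ) * L * l)) / l ^ 2 by
            field_simp; ring,
          show (19 * ((n:ℝ)/l)) ^ 2 * 16 = (5776 * ((n:ℝ) * (n:ℝ))) / l ^ 2 by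
            field_simp; ring]
      gcongr ?_ / _
      nlinarith [mul_le_mul_of_nonneg_left hLl16 (mul_nonneg hs0 hn0.le)]
    have hstep2 : (19 * ((n:ℝ)/l)) ^ 2 / (4 * (51 * (n:ℝ) * L / l))
        ≤ M ^ 2 / (4 * (51 * (n:ℝ) * L / l)) := by
      gcongr ?_ / _
      exact pow_le_pow_left₀ (by positivity) hM19 2
    have hstep3 : M ^ 2 / (4 * (51 * (n:ℝ) * L / l)) ≤ M ^ 2 / (4 * ((n:ℝ) + t)) := by
      apply div_le_div_of_nonneg_left (sq_nonneg M) (by positivity)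
      linarith
    linarith
  rw [neg_div]
  have : -(s/16) ≤ -(M ^ 2 / (4 * ((n:ℝ) + t))) → True := fun _ => trivial
  linarith [hkey]

theorem phase_two_succeeds
    (K : ℕ → ℕ) (hK1 : ∀ n, 1 ≤ K n)
    (hKO : ∃ C : ℝ, ∀ᶠ n : ℕ in atTop, (K n : ℝ) ≤ C * Real.log n) :
    Tendsto
      (fun n : ℕ =>
        let tε : ℕ :=
          ⌊50 * (1 + Real.log n / (2 * K n)) * n / Real.log (Real.log n)⌋₊
        let q : ℝ := 1 - Real.exp (-(K n : ℝ) / (Real.log (Real.log n)) ^ 4)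
        binomLT (n + tε) q (n : ℝ))
      atTop (nhds 0) := by
  have hlog : Tendsto (fun n : ℕ => Real.log n) atTop atTop :=
    Real.tendsto_log_atTop.comp tendsto_natCast_atTop_atTop
  have hupper : Tendsto (fun n : ℕ => Real.exp (-((n:ℝ) ^ ((1:ℝ)/2) / 16))) atTop (nhds 0) := by
    apply Real.tendsto_exp_atBot.comp
    apply tendsto_neg_atTop_atBot.comp
    exact ((tendsto_rpow_atTop (by norm_num)).comp tendsto_natCast_atTop_atTop).atTop_div_const
      (by norm_num)
  refine tendsto_of_tendsto_of_tendsto_of_le_of_le' tendsto_const_nhds hupper ?_ ?_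
  · filter_upwards with n
    have harg : -(K n : ℝ) / (Real.log (Real.log n)) ^ 4 ≤ 0 :=
      div_nonpos_of_nonpos_of_nonneg (neg_nonpos.2 (Nat.cast_nonneg _)) (by positivity)
    have hE1 : Real.exp (-(K n : ℝ) / (Real.log (Real.log n)) ^ 4) ≤ 1 :=
      Real.exp_le_one_iff.2 harg
    have hEpos : 0 < Real.exp (-(K n : ℝ) / (Real.log (Real.log n)) ^ 4) := Real.exp_pos _
    exact binomLT_nonneg _ _ _ (by linarith) (by linarith)
  · filter_upwards [hlog.eventually_ge_atTop ((10:ℝ)^10)] with n hL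
    exact main_bound K hK1 n hL
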